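/- Distinct release times normalization preserves feasibility: given unit jobs with windows [r_j, d_j], if two jobs i ≠ j have r_i = r_j and d_i ≤ d_j, then replacing r_j by r_j + 1 yields an instance that is feasible if and only if the original is, and moreover any schedule of one instance is a schedule of the other with the same set of busy slots (after possibly swapping the slots of i and j). -/
import Mathlib

theorem release_time_normalization (n : ℕ) (r d : Fin n → ℤ) (i j : Fin n)
    (hij : i ≠ j) (hr : r i = r j) (hd : d i ≤ d j) :
    ((∃ S : Fin n → ℤ, Function.Injective S ∧ ∀ k, r k ≤ S k ∧ S k ≤ d k) ↔
      (∃ S : Fin n → ℤ, Function.Injective S ∧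
        ∀ k, Function.update r j (r j + 1) k ≤ S k ∧ S k ≤ d k)) ∧
    (∀ S : Fin n → ℤ, Function.Injective S → (∀ k, r k ≤ S k ∧ S k ≤ d k) →
      ∃ S' : Fin n → ℤ, Function.Injective S' ∧
        (∀ k, Function.update r j (r j + 1) k ≤ S' k ∧ S' k ≤ d k) ∧
        Set.range S' = Set.range S) ∧
    (∀ S : Fin n → ℤ, Function.Injective S →
      (∀ k, Function.update r j (r j + 1) k ≤ S k ∧ S k ≤ d k) →
      ∃ S' : Fin n → ℤ, Function.Injective S' ∧ (∀ k, r k ≤ S' k ∧ S' k ≤ d k) ∧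
        Set.range S' = Set.range S) := by
  have fwd : ∀ S : Fin n → ℤ, Function.Injective S → (∀ k, r k ≤ S k ∧ S k ≤ d k) →
      ∃ S' : Fin n → ℤ, Function.Injective S' ∧
        (∀ k, Function.update r j (r j + 1) k ≤ S' k ∧ S' k ≤ d k) ∧
        Set.range S' = Set.range S := by
    intro S hS hfeas
    by_cases h : r j + 1 ≤ S j
    · refine ⟨S, hS, fun k => ?_, rfl⟩
      rcases eq_or_ne k j with rfl | hk
      · simpa using ⟨h, (hfeas k).2⟩
      · rw [Function.update_of_ne hk]; exact hfeas k
    · -- S j = r j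
      have hSj : S j = r j := le_antisymm (by omega) ((hr ▸ hr) ▸ (hr ▸ (hfeas j).1))
      have hSi : r j + 1 ≤ S i := by
        have h1 : r j ≤ S i := hr ▸ (hfeas i).1
        have h2 : S i ≠ S j := fun e => hij (hS e)
        omega
      refine ⟨S ∘ Equiv.swap i j, hS.comp (Equiv.swap i j).injective, fun k => ?_, ?_⟩
      · rcases eq_or_ne k j with rfl | hkj
        · simp only [Function.comp_apply, Equiv.swap_apply_right, Function.update_self]
          exact ⟨hSi, le_trans (hfeas i).2 hd⟩
        · rw [Function.update_of_ne hkj]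
          rcases eq_or_ne k i with rfl | hki
          · simp only [Function.comp_apply, Equiv.swap_apply_left, hSj, ← hr]
            exact ⟨le_rfl, (hfeas k).1.trans (hfeas k).2⟩
          · rw [Function.comp_apply, Equiv.swap_apply_of_ne_of_ne hki hkj]
            exact hfeas k
      · rw [Set.range_comp, Equiv.range_eq_univ, Set.image_univ]
  have bwd : ∀ S : Fin n → ℤ, Function.Injective S →
      (∀ k, Function.update r j (r j + 1) k ≤ S k ∧ S k ≤ d k) →
      ∃ S' : Fin n → ℤ, Function.Injective S' ∧ (∀ k, r k ≤ S' k ∧ S' k ≤ d k) ∧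
        Set.range S' = Set.range S := by
    intro S hS hfeas
    refine ⟨S, hS, fun k => ⟨?_, (hfeas k).2⟩, rfl⟩
    have := (hfeas k).1
    rcases eq_or_ne k j with rfl | hk
    · rw [Function.update_self] at this; omega
    · rwa [Function.update_of_ne hk] at this
  refine ⟨⟨?_, ?_⟩, fwd, bwd⟩
  · rintro ⟨S, hS, hfeas⟩
    obtain ⟨S', h1, h2, _⟩ := fwd S hS hfeas
    exact ⟨S', h1, h2⟩
  · rintro ⟨S, hS, hfeas⟩
    obtain ⟨S', h1, h2, _⟩ := bwd S hS hfeas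
    exact ⟨S', h1, h2⟩
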